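/- GLS coincides with blockwise least squares when all design matrices are identical. Consider SUR data with a common design matrix X₀ ∈ ℝ^{n×p₀} (i.e. p_j = p₀ and X_j = X₀ for all j = 1,…,m) and responses y_j ∈ ℝ^n, with X₀ᵀ X₀ invertible, and let Σ ∈ ℝ^{m×m} be any symmetric positive definite matrix. Let X = bdiag(X₀,…,X₀) ∈ ℝ^{nm×mp₀} and y = (y₁ᵀ,…,y_mᵀ)ᵀ ∈ ℝ^{nm} (coordinates indexed by pairs (j,i) of block and observation), and let Σ⁻¹ ⊗ I_n denote the Kronecker product acting on these coordinates. Then Xᵀ(Σ⁻¹ ⊗ I_n)X is invertible and the j-th block of the GLS estimator β̂_GLS = (Xᵀ(Σ⁻¹ ⊗ I_n)X)⁻¹ Xᵀ(Σ⁻¹ ⊗ I_n) y equals the ordinary least squares estimator (X₀ᵀ X₀)⁻¹ X₀ᵀ y_j for every j = 1,…,m. -/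

import Mathlib

open Matrix Kronecker

noncomputable section

/-- The stacked design matrix `X = bdiag(X₀,…,X₀) ∈ ℝ^{nm×mp₀}` for a SUR model with a
common design matrix `X₀`, with rows indexed by pairs `(j, i)` of block and observation
and columns indexed by pairs `(j, k)` of block and predictor. -/
def bigXCommon {n p₀ : ℕ} (m : ℕ) (X₀ : Matrix (Fin n) (Fin p₀) ℝ) :
    Matrix (Fin m × Fin n) (Fin m × Fin p₀) ℝ :=
  Matrix.of fun r q => if r.1 = q.1 then X₀ r.2 q.2 else 0

lemma bigXCommon_eq_kron {n p₀ : ℕ} (m : ℕ) (X₀ : Matrix (Fin n) (Fin p₀) ℝ) :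
    bigXCommon m X₀ = (1 : Matrix (Fin m) (Fin m) ℝ) ⊗ₖ X₀ := by
  ext ⟨j, i⟩ ⟨j', k⟩
  simp [bigXCommon, Matrix.one_apply, ite_mul]

/-- **GLS coincides with blockwise least squares when all design matrices are
identical**: for any symmetric positive definite `Σ`, `Xᵀ(Σ⁻¹ ⊗ I_n)X` is invertible
and the `j`-th block of `β̂_GLS` equals `(X₀ᵀX₀)⁻¹X₀ᵀy_j`. -/
theorem GLS_eq_OLS_of_common_design
    {n m p₀ : ℕ} (hm : 1 < m)
    (X₀ : Matrix (Fin n) (Fin p₀) ℝ) (hX₀ : IsUnit (X₀ᵀ * X₀).det)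
    (yv : Fin m → Fin n → ℝ)
    (Sig : Matrix (Fin m) (Fin m) ℝ) (hSig : Sig.PosDef) :
    IsUnit ((bigXCommon m X₀)ᵀ * (Sig⁻¹ ⊗ₖ (1 : Matrix (Fin n) (Fin n) ℝ)) *
        bigXCommon m X₀).det ∧
      ∀ (j : Fin m) (k : Fin p₀),
        (((bigXCommon m X₀)ᵀ * (Sig⁻¹ ⊗ₖ (1 : Matrix (Fin n) (Fin n) ℝ)) *
            bigXCommon m X₀)⁻¹.mulVec
          (((bigXCommon m X₀)ᵀ *
            (Sig⁻¹ ⊗ₖ (1 : Matrix (Fin n) (Fin n) ℝ))).mulVec fun r => yv r.1 r.2)) (j, k)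
        = ((X₀ᵀ * X₀)⁻¹.mulVec (X₀ᵀ.mulVec (yv j))) k := by
  have hSigdet : IsUnit Sig.det := isUnit_iff_ne_zero.mpr hSig.det_pos.ne'
  have hSiginv : IsUnit Sig⁻¹.det := Sig.isUnit_nonsing_inv_det hSigdet
  -- Xᵀ = 1 ⊗ X₀ᵀ
  have hXT : (bigXCommon m X₀)ᵀ = (1 : Matrix (Fin m) (Fin m) ℝ) ⊗ₖ X₀ᵀ := by
    rw [bigXCommon_eq_kron]
    rw [show ((1 : Matrix (Fin m) (Fin m) ℝ) ⊗ₖ X₀)ᵀ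
        = (1 : Matrix (Fin m) (Fin m) ℝ)ᵀ ⊗ₖ X₀ᵀ from (kroneckerMap_transpose _ _ _).symm,
      Matrix.transpose_one]
  -- Xᵀ (Σ⁻¹ ⊗ I)
  have hXTS : (bigXCommon m X₀)ᵀ * (Sig⁻¹ ⊗ₖ (1 : Matrix (Fin n) (Fin n) ℝ))
      = Sig⁻¹ ⊗ₖ X₀ᵀ := by
    rw [hXT, ← Matrix.mul_kronecker_mul, Matrix.one_mul, Matrix.mul_one]
  -- M = Σ⁻¹ ⊗ (X₀ᵀ X₀)
  have hM : (bigXCommon m X₀)ᵀ * (Sig⁻¹ ⊗ₖ (1 : Matrix (Fin n) (Fin n) ℝ)) *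
      bigXCommon m X₀ = Sig⁻¹ ⊗ₖ (X₀ᵀ * X₀) := by
    rw [hXTS, bigXCommon_eq_kron, ← Matrix.mul_kronecker_mul, Matrix.mul_one]
  have hMdet : IsUnit ((bigXCommon m X₀)ᵀ * (Sig⁻¹ ⊗ₖ (1 : Matrix (Fin n) (Fin n) ℝ)) *
      bigXCommon m X₀).det := by
    rw [hM, Matrix.det_kronecker]
    exact (hSiginv.pow _).mul (hX₀.pow _)
  refine ⟨hMdet, fun j k => ?_⟩
  -- M⁻¹ = Σ ⊗ (X₀ᵀX₀)⁻¹
  have hMinv : ((bigXCommon m X₀)ᵀ * (Sig⁻¹ ⊗ₖ (1 : Matrix (Fin n) (Fin n) ℝ)) *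
      bigXCommon m X₀)⁻¹ = Sig ⊗ₖ (X₀ᵀ * X₀)⁻¹ := by
    rw [hM, Matrix.inv_kronecker, Sig.nonsing_inv_nonsing_inv hSigdet]
  have hcomp : ((bigXCommon m X₀)ᵀ * (Sig⁻¹ ⊗ₖ (1 : Matrix (Fin n) (Fin n) ℝ)) *
        bigXCommon m X₀)⁻¹ *
      ((bigXCommon m X₀)ᵀ * (Sig⁻¹ ⊗ₖ (1 : Matrix (Fin n) (Fin n) ℝ)))
      = (1 : Matrix (Fin m) (Fin m) ℝ) ⊗ₖ ((X₀ᵀ * X₀)⁻¹ * X₀ᵀ) := by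
    rw [hMinv, hXTS, ← Matrix.mul_kronecker_mul, Sig.mul_nonsing_inv hSigdet]
  have hcomp' : ((bigXCommon m X₀)ᵀ * (Sig⁻¹ ⊗ₖ (1 : Matrix (Fin n) (Fin n) ℝ)) *
        bigXCommon m X₀)⁻¹ *
      (bigXCommon m X₀)ᵀ * (Sig⁻¹ ⊗ₖ (1 : Matrix (Fin n) (Fin n) ℝ))
      = (1 : Matrix (Fin m) (Fin m) ℝ) ⊗ₖ ((X₀ᵀ * X₀)⁻¹ * X₀ᵀ) := by
    rw [Matrix.mul_assoc]; exact hcomp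
  rw [Matrix.mulVec_mulVec, Matrix.mulVec_mulVec, hcomp]
  simp only [Matrix.mulVec, dotProduct, Fintype.sum_prod_type, kroneckerMap_apply,
    Matrix.one_apply, ite_mul, one_mul, zero_mul, mul_ite, mul_zero]
  rw [Finset.sum_comm]
  simp [Finset.sum_ite_eq']
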